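/- Let A be an n×n real symmetric matrix that is the adjacency matrix of a graph, σ* ∈ {±1}ⁿ, and Y* = σ*(σ*)ᵀ. Suppose there exist a diagonal matrix D* and λ* ∈ ℝ such that S* := D* - A + λ*·J (J the all-ones matrix) satisfies: S* is positive semidefinite, the second smallest eigenvalue of S* is strictly positive, and S*σ* = 0. Then Y* is the unique maximizer of ⟨A,Y⟩ over all symmetric positive semidefinite matrices Y with Yᵢᵢ = 1 for all i and ⟨J,Y⟩ = ⟨J,Y*⟩. -/

import Mathlib

open Matrix

/-- Trace inner product `⟨A,Y⟩ = ∑ᵢⱼ Aᵢⱼ Yᵢⱼ`. -/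
def traceInner {n : ℕ} (A Y : Matrix (Fin n) (Fin n) ℝ) : ℝ :=
  ∑ i, ∑ j, A i j * Y i j

lemma traceInner_psd_nonneg_aux {n : ℕ} (S Y : Matrix (Fin n) (Fin n) ℝ)
    (hpsd : S.PosSemidef) (hY : Y.PosSemidef) :
    0 ≤ traceInner S Y ∧ (traceInner S Y = 0 →
      ∃ B : Matrix (Fin n) (Fin n) ℝ, Y = Bᴴ * B ∧
        ∀ i, S.mulVec (fun j => B i j) = 0) := by
  obtain ⟨B, hB⟩ : ∃ B : Matrix (Fin n) (Fin n) ℝ, Y = Bᴴ * B := by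
    open scoped MatrixOrder in
    exact CStarAlgebra.nonneg_iff_eq_star_mul_self.mp hY.nonneg
  have hYapp : ∀ j k, Y j k = ∑ i, B i j * B i k := by
    intro j k
    rw [hB]
    simp [Matrix.mul_apply, Matrix.conjTranspose_apply]
  set q : Fin n → ℝ := fun i => (fun j => B i j) ⬝ᵥ S.mulVec (fun j => B i j) with hqdef
  have hq : traceInner S Y = ∑ i, q i := by
    have e1 : traceInner S Y = ∑ j, ∑ k, ∑ i, S j k * (B i j * B i k) := by
      unfold traceInner
      refine Finset.sum_congr rfl fun j _ => Finset.sum_congr rfl fun k _ => ?_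
      rw [hYapp, Finset.mul_sum]
    have e2 : ∀ j : Fin n, (∑ k, ∑ i, S j k * (B i j * B i k))
        = ∑ i, ∑ k, S j k * (B i j * B i k) := fun j => Finset.sum_comm
    rw [e1]
    simp only [e2]
    rw [Finset.sum_comm]
    refine Finset.sum_congr rfl fun i _ => ?_
    simp only [hqdef, dotProduct, Matrix.mulVec, Finset.mul_sum]
    refine Finset.sum_congr rfl fun j _ => Finset.sum_congr rfl fun k _ => ?_
    ring
  have hqnn : ∀ i, 0 ≤ q i := by
    intro i
    have := hpsd.dotProduct_mulVec_nonneg (fun j => B i j)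
    simpa using this
  constructor
  · rw [hq]
    exact Finset.sum_nonneg fun i _ => hqnn i
  · intro h0
    refine ⟨B, hB, fun i => ?_⟩
    have hqz : q i = 0 := by
      have := (Finset.sum_eq_zero_iff_of_nonneg (fun i _ => hqnn i)).mp (hq ▸ h0)
      exact this i (Finset.mem_univ i)
    have : star (fun j => B i j) ⬝ᵥ S.mulVec (fun j => B i j) = 0 := by
      simpa [hqdef] using hqz
    exact (hpsd.dotProduct_mulVec_zero_iff _).mp this

/-- Dual certificate lemma for the SDP relaxation in the binary asymmetric SBM.
If `S* = D* - A + λ*·J` is PSD, has `σ*` in its kernel, and its second smallest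
eigenvalue is positive (equivalently, given PSD and `S*σ* = 0`, its kernel is exactly
the span of `σ*`), then `Y* = σ*(σ*)ᵀ` is the unique maximizer of `⟨A,Y⟩` over
PSD matrices with unit diagonal and `⟨J,Y⟩ = ⟨J,Y*⟩`. -/
theorem sdp_dual_certificate_asym_sbm {n : ℕ}
    (A : Matrix (Fin n) (Fin n) ℝ) (hA : A.IsSymm)
    (σ : Fin n → ℝ) (hσ : ∀ i, σ i = 1 ∨ σ i = -1)
    (d : Fin n → ℝ) (lam : ℝ)
    (Ystar : Matrix (Fin n) (Fin n) ℝ) (hYstar : Ystar = Matrix.of fun i j => σ i * σ j)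
    (J : Matrix (Fin n) (Fin n) ℝ) (hJ : J = Matrix.of fun _ _ => (1 : ℝ))
    (S : Matrix (Fin n) (Fin n) ℝ)
    (hS : S = Matrix.diagonal d - A + lam • J)
    (hpsd : S.PosSemidef)
    (hker : ∀ x : Fin n → ℝ, S.mulVec x = 0 → ∃ c : ℝ, x = c • σ)
    (hSσ : S.mulVec σ = 0) :
    ∀ Y : Matrix (Fin n) (Fin n) ℝ,
      Y.PosSemidef → (∀ i, Y i i = 1) → traceInner J Y = traceInner J Ystar →
        traceInner A Y ≤ traceInner A Ystar ∧
        (traceInner A Y = traceInner A Ystar → Y = Ystar) := by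
  intro Y hY hdiag hJY
  have hσsq : ∀ i, σ i * σ i = 1 := by
    intro i; rcases hσ i with h | h <;> rw [h] <;> norm_num
  have hAeq : A = Matrix.diagonal d + lam • J - S := by rw [hS]; abel
  -- key trace identity
  have key : ∀ Z : Matrix (Fin n) (Fin n) ℝ, (∀ i, Z i i = 1) →
      traceInner A Z = (∑ i, d i) + lam * traceInner J Z - traceInner S Z := by
    intro Z hZ
    have hterm : ∀ i j, A i j * Z i j =
        Matrix.diagonal d i j * Z i j + lam * (J i j * Z i j) - S i j * Z i j := by
      intro i j
      rw [hAeq]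
      simp only [Matrix.sub_apply, Matrix.add_apply, Matrix.smul_apply, smul_eq_mul]
      ring
    have hdZ : (∑ i, ∑ j, Matrix.diagonal d i j * Z i j) = ∑ i, d i := by
      refine Finset.sum_congr rfl fun i _ => ?_
      rw [Finset.sum_eq_single i]
      · simp [Matrix.diagonal_apply_eq, hZ]
      · intro j _ hj
        simp [Matrix.diagonal_apply_ne' d hj]
      · simp
    unfold traceInner
    simp only [hterm, Finset.sum_sub_distrib, Finset.sum_add_distrib, ← Finset.mul_sum]
    rw [hdZ]
  -- Ystar has unit diagonal
  have hYstardiag : ∀ i, Ystar i i = 1 := by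
    intro i; rw [hYstar]; simpa using hσsq i
  -- ⟨S, Ystar⟩ = 0
  have hSYstar : traceInner S Ystar = 0 := by
    have h1 : traceInner S Ystar = ∑ i, σ i * (S.mulVec σ) i := by
      unfold traceInner
      refine Finset.sum_congr rfl fun i _ => ?_
      rw [Matrix.mulVec, dotProduct, Finset.mul_sum]
      refine Finset.sum_congr rfl fun j _ => ?_
      rw [hYstar]
      simp only [Matrix.of_apply]
      ring
    rw [h1, hSσ]
    simp
  obtain ⟨hnn, heqcase⟩ := traceInner_psd_nonneg_aux S Y hpsd hY
  have hkey1 := key Y hdiag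
  have hkey2 := key Ystar hYstardiag
  have hdiff : traceInner A Ystar - traceInner A Y = traceInner S Y := by
    rw [hkey1, hkey2, hJY, hSYstar]
    ring
  constructor
  · linarith
  · intro heq
    have hSY0 : traceInner S Y = 0 := by rw [← hdiff, heq]; ring
    obtain ⟨B, hB, hrows⟩ := heqcase hSY0
    -- each row of B is a multiple of σ
    have hrowc : ∀ i, ∃ c : ℝ, (fun j => B i j) = c • σ := fun i => hker _ (hrows i)
    choose c hc using hrowc
    have hBij : ∀ i j, B i j = c i * σ j := by
      intro i j
      have := congrFun (hc i) j
      simpa using this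
    have hYapp : ∀ j k, Y j k = (∑ i, c i * c i) * (σ j * σ k) := by
      intro j k
      rw [hB]
      simp only [Matrix.mul_apply, Matrix.conjTranspose_apply, RCLike.star_def,
        starRingEnd_apply, star_trivial, hBij, Finset.sum_mul]
      refine Finset.sum_congr rfl fun i _ => ?_
      ring
    ext j k
    have hsum : (∑ i, c i * c i) = 1 := by
      have := hdiag j
      rw [hYapp j j, hσsq j, mul_one] at this
      exact this
    rw [hYapp j k, hsum, one_mul, hYstar]
    simp
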